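/- Let A be an m × n matrix over ℂ that is a (q,k,t)-design matrix. Then there exists an nk × n matrix B, each of whose rows is a row of A and in which each row of A appears at most q times (i.e., B is a q-cover of A), such that B satisfies Property-S. -/

import Mathlib

/-- An `m × n` matrix `A` over a field is a `(q,k,t)`-design matrix if every row has
support of size at most `q`, every column has support of size at least `k`, and the
supports of any two distinct columns intersect in at most `t` coordinates. -/
def IsDesignMatrix {F : Type*} [Field F] {m n : ℕ}
    (A : Matrix (Fin m) (Fin n) F) (q k t : ℕ) : Prop :=
  (∀ i : Fin m, {j : Fin n | A i j ≠ 0}.ncard ≤ q) ∧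
  (∀ j : Fin n, k ≤ {i : Fin m | A i j ≠ 0}.ncard) ∧
  (∀ j₁ j₂ : Fin n, j₁ ≠ j₂ →
    ({i : Fin m | A i j₁ ≠ 0} ∩ {i : Fin m | A i j₂ ≠ 0}).ncard ≤ t)

/-- A matrix `M` of dimensions `m × n` satisfies Property-S if for every `a × b`
all-zero submatrix of `M` it holds that `a/m + b/n ≤ 1`. -/
def PropertyS {F : Type*} [Field F] {m n : ℕ} (M : Matrix (Fin m) (Fin n) F) : Prop :=
  ∀ (I : Finset (Fin m)) (J : Finset (Fin n)),
    (∀ i ∈ I, ∀ j ∈ J, M i j = 0) →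
    (I.card : ℝ) / (m : ℝ) + (J.card : ℝ) / (n : ℝ) ≤ 1

theorem q_cover_exists {m n q k t : ℕ} (A : Matrix (Fin m) (Fin n) ℂ)
    (hA : IsDesignMatrix A q k t) :
    ∃ (B : Matrix (Fin (n * k)) (Fin n) ℂ) (r : Fin (n * k) → Fin m),
      (∀ i, B i = A (r i)) ∧
      (∀ i' : Fin m, ({i : Fin (n * k) | r i = i'}).ncard ≤ q) ∧
      PropertyS B := by
  classical
  obtain ⟨hrow, hcol, -⟩ := hA
  -- For each column j, choose an injective selection of k rows with nonzero entries.
  have hg : ∀ j : Fin n, ∃ g : Fin k → Fin m,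
      Function.Injective g ∧ ∀ s, A (g s) j ≠ 0 := by
    intro j
    set S : Finset (Fin m) := Finset.univ.filter (fun i => A i j ≠ 0) with hSdef
    have hset : {i : Fin m | A i j ≠ 0} = ↑S := by
      ext i; simp [hSdef]
    have hS : k ≤ S.card := by
      have := hcol j
      rwa [hset, Set.ncard_coe_finset] at this
    obtain ⟨T, hTS, hTcard⟩ := Finset.exists_subset_card_eq hS
    refine ⟨T.orderEmbOfFin hTcard, (T.orderEmbOfFin hTcard).injective, fun s => ?_⟩
    have hmem : T.orderEmbOfFin hTcard s ∈ T := T.orderEmbOfFin_mem hTcard s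
    have := hTS hmem
    simpa [hSdef] using this
  choose g hginj hgne using hg
  set e : Fin n × Fin k ≃ Fin (n * k) := finProdFinEquiv with he
  set r : Fin (n * k) → Fin m := fun idx => g (e.symm idx).1 (e.symm idx).2 with hr
  refine ⟨fun i => A (r i), r, fun _ => rfl, ?_, ?_⟩
  · -- each row of A used at most q times
    intro i'
    set s : Set (Fin (n * k)) := {i | r i = i'} with hs
    have hinj : Set.InjOn (fun idx => (e.symm idx).1) s := by
      intro x hx y hy hxy
      simp only [hs, Set.mem_setOf_eq, hr] at hx hy
      have hxy' : (e.symm x).1 = (e.symm y).1 := hxy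
      have h2 : (e.symm x).2 = (e.symm y).2 := by
        apply hginj (e.symm x).1
        rw [hx, hxy', hy]
      have : e.symm x = e.symm y := Prod.ext hxy h2
      exact e.symm.injective this
    have hsub : (fun idx => (e.symm idx).1) '' s ⊆ {j : Fin n | A i' j ≠ 0} := by
      rintro j ⟨x, hx, rfl⟩
      simp only [hs, Set.mem_setOf_eq, hr] at hx
      have := hgne (e.symm x).1 (e.symm x).2
      rw [hx] at this
      exact this
    calc s.ncard = ((fun idx => (e.symm idx).1) '' s).ncard :=
          (Set.ncard_image_of_injOn hinj).symm
      _ ≤ {j : Fin n | A i' j ≠ 0}.ncard :=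
          Set.ncard_le_ncard hsub (Set.toFinite _)
      _ ≤ q := hrow i'
  · -- Property S
    intro I J hzero
    rcases Nat.eq_zero_or_pos (n * k) with h0 | hpos
    · have hI : I = ∅ := Finset.eq_empty_of_forall_notMem fun x _ =>
        absurd x.isLt (by omega)
      subst hI
      simp only [Finset.card_empty, Nat.cast_zero, zero_div, zero_add]
      rcases Nat.eq_zero_or_pos n with hn | hn
      · subst hn
        have : J = ∅ := Finset.eq_empty_of_forall_notMem fun x _ =>
          (Nat.not_lt_zero _ x.isLt)
        simp [this]
      · rw [div_le_one (by exact_mod_cast hn)]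
        have : J.card ≤ n := by
          have := J.card_le_univ
          simpa using this
        exact_mod_cast this
    · have hn : 0 < n := by
        rcases Nat.eq_zero_or_pos n with h | h
        · simp [h] at hpos
        · exact h
      have hk : 0 < k := by
        rcases Nat.eq_zero_or_pos k with h | h
        · simp [h] at hpos
        · exact h
      set K : Finset (Fin (n * k)) := (J ×ˢ Finset.univ).image e with hK
      have hKcard : K.card = J.card * k := by
        rw [hK, Finset.card_image_of_injective _ e.injective, Finset.card_product,
          Finset.card_univ, Fintype.card_fin]
      have hdisj : Disjoint I K := by
        rw [Finset.disjoint_right]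
        intro idx hidxK hidxI
        simp only [hK, Finset.mem_image, Finset.mem_product, Finset.mem_univ, and_true] at hidxK
        obtain ⟨⟨j, s⟩, hj, rfl⟩ := hidxK
        have h1 := hzero _ hidxI j hj
        have h2 : A (r (e (j, s))) j ≠ 0 := by
          simp only [hr, Equiv.symm_apply_apply]
          exact hgne j s
        exact h2 h1
      have hcard : I.card + J.card * k ≤ n * k := by
        have h1 : (I ∪ K).card = I.card + K.card := Finset.card_union_of_disjoint hdisj
        have h2 : (I ∪ K).card ≤ n * k := by
          have := Finset.card_le_univ (I ∪ K)
          simpa using this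
        omega
      have hnR : (0 : ℝ) < (n : ℝ) := by exact_mod_cast hn
      have hkR : (0 : ℝ) < (k : ℝ) := by exact_mod_cast hk
      have hnkR : (0 : ℝ) < (n : ℝ) * (k : ℝ) := by positivity
      have key : (I.card : ℝ) + (J.card : ℝ) * k ≤ (n : ℝ) * k := by exact_mod_cast hcard
      have hJ : (J.card : ℝ) / n = ((J.card : ℝ) * k) / ((n : ℝ) * k) := by
        field_simp
      push_cast
      rw [hJ, ← add_div, div_le_one hnkR]
      exact key
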